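/- In the finite-volume sandpile model on [−n,n] with boundary ones, for every ordered pair of distinct recurrent configurations (η,ζ) ∈ 𝓡_n × 𝓡_n there exists a unique site i ∈ [−n,n] ∩ ℤ such that T_{n,i} η = ζ. -/
import Mathlib


open Filter

noncomputable section

attribute [local instance] Classical.propDecidable

/-- A configuration of the one-dimensional sandpile: heights in `{1,2}`. -/
def IsConfig (η : ℤ → ℤ) : Prop := ∀ x, η x = 1 ∨ η x = 2

/-- The indicator function of site `i`. -/
def e (i : ℤ) : ℤ → ℤ := fun x => if x = i then 1 else 0

/-- `Kp i η = {j ≥ 0 : η (i+j) = 1}`. -/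
def Kp (i : ℤ) (η : ℤ → ℤ) : Set ℕ := {j : ℕ | η (i + (j : ℤ)) = 1}

/-- `Km i η = {j > 0 : η (i−j) = 1}`. -/
def Km (i : ℤ) (η : ℤ → ℤ) : Set ℕ := {j : ℕ | 0 < j ∧ η (i - (j : ℤ)) = 1}

/-- `k⁺(i,η)`, meaningful when `Kp i η` is nonempty (i.e. `k⁺(i,η) < ∞`). -/
noncomputable def kplus (i : ℤ) (η : ℤ → ℤ) : ℕ := sInf (Kp i η)

/-- `k⁻(i,η)`, meaningful when `Km i η` is nonempty (i.e. `k⁻(i,η) < ∞`). -/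
noncomputable def kminus (i : ℤ) (η : ℤ → ℤ) : ℕ := sInf (Km i η)

/-- The toppling transformation `T i`, by the five cases of the paper. -/
noncomputable def T (i : ℤ) (η : ℤ → ℤ) : ℤ → ℤ :=
  if η i = 1 then η + e i
  else if (Kp i η).Nonempty then
    if (Km i η).Nonempty then
      η + e (i + (kplus i η : ℤ)) + e (i - (kminus i η : ℤ))
        - e (i + (kplus i η : ℤ) - (kminus i η : ℤ))
    else η + e (i + (kplus i η : ℤ))
  else if (Km i η).Nonempty then η + e (i - (kminus i η : ℤ))
  else η

/-- `[η]^n`: reset all coordinates outside `[-n,n]` to `1`. -/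
def restrictN (n : ℕ) (η : ℤ → ℤ) : ℤ → ℤ :=
  fun x => if -(n : ℤ) ≤ x ∧ x ≤ (n : ℤ) then η x else 1

/-- The finite-volume toppling `T_{n,i} η = [T_i η^n]^n`. -/
noncomputable def Tn (n : ℕ) (i : ℤ) (η : ℤ → ℤ) : ℤ → ℤ :=
  restrictN n (T i (restrictN n η))

/-- The recurrent configurations of the finite-volume sandpile on `[-n,n]`:
elements of `Ω_{f,n}` with `Σ_{i=-n}^n (2 − η i) ≤ 1`, i.e. at most one site in `[-n,n]`
with height `1`. -/
def Rec (n : ℕ) (η : ℤ → ℤ) : Prop :=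
  IsConfig η ∧ (∀ j : ℤ, ¬(-(n : ℤ) ≤ j ∧ j ≤ (n : ℤ)) → η j = 1) ∧
    (∑ i ∈ Finset.Icc (-(n : ℤ)) (n : ℤ), (2 - η i)) ≤ 1


/-- All-twos configuration on `[-n,n]`. -/
def AA (n : ℕ) : ℤ → ℤ := fun x => if -(n : ℤ) ≤ x ∧ x ≤ (n : ℤ) then 2 else 1

/-- Configuration with a single `1` at `b` inside `[-n,n]`, twos elsewhere inside. -/
def BB (n : ℕ) (b : ℤ) : ℤ → ℤ :=
  fun x => if x = b then 1 else if -(n : ℤ) ≤ x ∧ x ≤ (n : ℤ) then 2 else 1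

lemma sInf_eq_of {S : Set ℕ} {k : ℕ} (hk : k ∈ S) (hmin : ∀ m ∈ S, k ≤ m) :
    sInf S = k :=
  le_antisymm (Nat.sInf_le hk) (hmin _ (Nat.sInf_mem ⟨k, hk⟩))

lemma T_eval {i : ℤ} {η : ℤ → ℤ} (h2 : η i = 2) {p m : ℕ}
    (hp : η (i + (p : ℤ)) = 1) (hpmin : ∀ j : ℕ, η (i + (j : ℤ)) = 1 → p ≤ j)
    (hm0 : 0 < m) (hm : η (i - (m : ℤ)) = 1)
    (hmmin : ∀ j : ℕ, 0 < j → η (i - (j : ℤ)) = 1 → m ≤ j) :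
    T i η = η + e (i + (p : ℤ)) + e (i - (m : ℤ)) - e (i + (p : ℤ) - (m : ℤ)) := by
  have hKp : (Kp i η).Nonempty := ⟨p, hp⟩
  have hKm : (Km i η).Nonempty := ⟨m, hm0, hm⟩
  have hkp : kplus i η = p := sInf_eq_of hp fun j hj => hpmin j hj
  have hkm : kminus i η = m := sInf_eq_of ⟨hm0, hm⟩ fun j hj => hmmin j hj.1 hj.2
  unfold T
  rw [if_neg (by omega), if_pos hKp, if_pos hKm, hkp, hkm]

lemma restrict_AA (n : ℕ) : restrictN n (AA n) = AA n := by
  funext x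
  simp only [restrictN, AA]
  split_ifs <;> omega

lemma restrict_BB (n : ℕ) {b : ℤ} (hb : -(n : ℤ) ≤ b ∧ b ≤ (n : ℤ)) :
    restrictN n (BB n b) = BB n b := by
  funext x
  simp only [restrictN, BB]
  split_ifs <;> omega

lemma Tn_AA (n : ℕ) {i : ℤ} (hi : -(n : ℤ) ≤ i ∧ i ≤ (n : ℤ)) :
    Tn n i (AA n) = BB n (-i) := by
  rw [Tn, restrict_AA]
  have h2 : AA n i = 2 := by simp only [AA]; rw [if_pos hi]
  rw [T_eval h2 (p := (n + 1 - i).toNat) (m := (i + n + 1).toNat)]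
  · funext x
    simp only [restrictN, BB, AA, Pi.add_apply, Pi.sub_apply, e]
    split_ifs <;> omega
  · simp only [AA]
    rw [if_neg (by omega)]
  · intro j hj
    simp only [AA] at hj
    split_ifs at hj <;> omega
  · omega
  · simp only [AA]
    rw [if_neg (by omega)]
  · intro j hj0 hj
    simp only [AA] at hj
    split_ifs at hj <;> omega

lemma Tn_BB_self (n : ℕ) {b : ℤ} (hb : -(n : ℤ) ≤ b ∧ b ≤ (n : ℤ)) :
    Tn n b (BB n b) = AA n := by
  rw [Tn, restrict_BB n hb]
  have h1 : BB n b b = 1 := by simp [BB]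
  unfold T
  rw [if_pos h1]
  funext x
  simp only [restrictN, BB, AA, Pi.add_apply, e]
  split_ifs <;> omega

lemma Tn_BB_lt (n : ℕ) {b i : ℤ} (hb : -(n : ℤ) ≤ b ∧ b ≤ (n : ℤ))
    (hi : -(n : ℤ) ≤ i) (hib : i < b) :
    Tn n i (BB n b) = BB n (b - i - n - 1) := by
  rw [Tn, restrict_BB n hb]
  have h2 : BB n b i = 2 := by
    simp only [BB]
    rw [if_neg (by omega), if_pos (by omega)]
  rw [T_eval h2 (p := (b - i).toNat) (m := (i + n + 1).toNat)]
  · funext x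
    simp only [restrictN, BB, Pi.add_apply, Pi.sub_apply, e]
    split_ifs <;> omega
  · simp only [BB]
    rw [if_pos (by omega)]
  · intro j hj
    simp only [BB] at hj
    split_ifs at hj <;> omega
  · omega
  · simp only [BB]
    rw [if_neg (by omega), if_neg (by omega)]
  · intro j hj0 hj
    simp only [BB] at hj
    split_ifs at hj <;> omega

lemma Tn_BB_gt (n : ℕ) {b i : ℤ} (hb : -(n : ℤ) ≤ b ∧ b ≤ (n : ℤ))
    (hi : i ≤ (n : ℤ)) (hib : b < i) :
    Tn n i (BB n b) = BB n (n + 1 + b - i) := by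
  rw [Tn, restrict_BB n hb]
  have h2 : BB n b i = 2 := by
    simp only [BB]
    rw [if_neg (by omega), if_pos (by omega)]
  rw [T_eval h2 (p := (n + 1 - i).toNat) (m := (i - b).toNat)]
  · funext x
    simp only [restrictN, BB, Pi.add_apply, Pi.sub_apply, e]
    split_ifs <;> omega
  · simp only [BB]
    rw [if_neg (by omega), if_neg (by omega)]
  · intro j hj
    simp only [BB] at hj
    split_ifs at hj <;> omega
  · omega
  · simp only [BB]
    rw [if_pos (by omega)]
  · intro j hj0 hj
    simp only [BB] at hj
    split_ifs at hj <;> omega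

lemma AA_ne_BB (n : ℕ) {b : ℤ} (hb : -(n : ℤ) ≤ b ∧ b ≤ (n : ℤ)) :
    AA n ≠ BB n b := by
  intro h
  have := congrFun h b
  simp only [AA, BB] at this
  split_ifs at this <;> omega

lemma BB_inj (n : ℕ) {a a' : ℤ} (ha : -(n : ℤ) ≤ a ∧ a ≤ (n : ℤ)) :
    BB n a = BB n a' → a = a' := by
  intro h
  have := congrFun h a
  simp only [BB, if_pos rfl] at this
  split_ifs at this <;> omega

lemma rec_cases {n : ℕ} {η : ℤ → ℤ} (h : Rec n η) :
    η = AA n ∨ ∃ b : ℤ, (-(n : ℤ) ≤ b ∧ b ≤ (n : ℤ)) ∧ η = BB n b := by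
  obtain ⟨hc, hout, hsum⟩ := h
  by_cases hex : ∃ b ∈ Finset.Icc (-(n : ℤ)) (n : ℤ), η b = 1
  · obtain ⟨b, hbmem, hb1⟩ := hex
    right
    refine ⟨b, Finset.mem_Icc.mp hbmem, ?_⟩
    have key : ∀ j ∈ Finset.Icc (-(n : ℤ)) (n : ℤ), j ≠ b → η j = 2 := by
      intro j hjmem hjb
      rcases hc j with hj1 | hj2
      · exfalso
        have hsub : ({b, j} : Finset ℤ) ⊆ Finset.Icc (-(n : ℤ)) (n : ℤ) := by
          intro x hx
          simp only [Finset.mem_insert, Finset.mem_singleton] at hx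
          rcases hx with rfl | rfl
          · exact hbmem
          · exact hjmem
        have h2le : (2 : ℤ) ≤ ∑ i ∈ Finset.Icc (-(n : ℤ)) (n : ℤ), (2 - η i) := by
          calc (2 : ℤ) = ∑ i ∈ ({b, j} : Finset ℤ), (2 - η i) := by
                rw [Finset.sum_pair (Ne.symm hjb)]
                omega
            _ ≤ _ := by
                apply Finset.sum_le_sum_of_subset_of_nonneg hsub
                intro x _ _
                rcases hc x with h | h <;> omega
        omega
      · exact hj2
    funext x
    simp only [BB]
    by_cases hx : x = b
    · subst hx
      rw [if_pos rfl]
      exact hb1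
    · rw [if_neg hx]
      by_cases hxin : -(n : ℤ) ≤ x ∧ x ≤ (n : ℤ)
      · rw [if_pos hxin]
        exact key x (Finset.mem_Icc.mpr hxin) hx
      · rw [if_neg hxin]
        exact hout x hxin
  · left
    push_neg at hex
    funext x
    simp only [AA]
    by_cases hxin : -(n : ℤ) ≤ x ∧ x ≤ (n : ℤ)
    · rw [if_pos hxin]
      rcases hc x with h | h
      · exact absurd h (hex x (Finset.mem_Icc.mpr hxin))
      · exact h
    · rw [if_neg hxin]
      exact hout x hxin

/-- for every ordered pair of distinct recurrent configurations
`(η, ζ) ∈ 𝓡_n × 𝓡_n` there exists a unique site `i ∈ [-n,n] ∩ ℤ` with `T_{n,i} η = ζ`. -/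
theorem unique_toppling_site (n : ℕ) (η ζ : ℤ → ℤ) (hη : Rec n η) (hζ : Rec n ζ)
    (hne : η ≠ ζ) :
    ∃! i : ℤ, i ∈ Finset.Icc (-(n : ℤ)) (n : ℤ) ∧ Tn n i η = ζ := by
  rcases rec_cases hη with rfl | ⟨b, hb, rfl⟩ <;>
    rcases rec_cases hζ with rfl | ⟨a, ha, rfl⟩
  · exact absurd rfl hne
  · -- η = AA, ζ = BB a : unique site is -a
    refine ⟨-a, ⟨Finset.mem_Icc.mpr (by omega), ?_⟩, ?_⟩
    · rw [Tn_AA n (by omega : -(n : ℤ) ≤ -a ∧ -a ≤ (n : ℤ)), neg_neg]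
    · rintro j ⟨hj, hTj⟩
      rw [Tn_AA n (Finset.mem_Icc.mp hj)] at hTj
      have := BB_inj n (by have := Finset.mem_Icc.mp hj; omega) hTj
      omega
  · -- η = BB b, ζ = AA : unique site is b
    refine ⟨b, ⟨Finset.mem_Icc.mpr hb, Tn_BB_self n hb⟩, ?_⟩
    rintro j ⟨hj, hTj⟩
    have hjm := Finset.mem_Icc.mp hj
    rcases lt_trichotomy j b with hlt | rfl | hgt
    · rw [Tn_BB_lt n hb hjm.1 hlt] at hTj
      exact absurd hTj.symm (AA_ne_BB n (by omega))
    · rfl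
    · rw [Tn_BB_gt n hb hjm.2 hgt] at hTj
      exact absurd hTj.symm (AA_ne_BB n (by omega))
  · -- η = BB b, ζ = BB a, a ≠ b
    have hab : a ≠ b := by
      intro h
      subst h
      exact hne rfl
    have key : ∀ j : ℤ, j ∈ Finset.Icc (-(n : ℤ)) (n : ℤ) → Tn n j (BB n b) = BB n a →
        j = if a < b then b - a - n - 1 else n + 1 + b - a := by
      intro j hj hTj
      have hjm := Finset.mem_Icc.mp hj
      rcases lt_trichotomy j b with hlt | rfl | hgt
      · rw [Tn_BB_lt n hb hjm.1 hlt] at hTj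
        have := BB_inj n (by omega) hTj
        split_ifs with h <;> omega
      · rw [Tn_BB_self n hb] at hTj
        exact absurd hTj (AA_ne_BB n ha)
      · rw [Tn_BB_gt n hb hjm.2 hgt] at hTj
        have := BB_inj n (by omega) hTj
        split_ifs with h <;> omega
    by_cases h : a < b
    · refine ⟨b - a - n - 1, ⟨Finset.mem_Icc.mpr (by omega), ?_⟩, ?_⟩
      · rw [Tn_BB_lt n hb (by omega) (by omega),
          show b - (b - a - (n : ℤ) - 1) - n - 1 = a by omega]
      · intro j hjj
        have := key j hjj.1 hjj.2
        rw [if_pos h] at this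
        exact this
    · have hba : b < a := by omega
      refine ⟨n + 1 + b - a, ⟨Finset.mem_Icc.mpr (by omega), ?_⟩, ?_⟩
      · rw [Tn_BB_gt n hb (by omega) (by omega),
          show (n : ℤ) + 1 + b - (n + 1 + b - a) = a by omega]
      · intro j hjj
        have := key j hjj.1 hjj.2
        rw [if_neg h] at this
        exact this
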